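/- For the Ky Fan inequality applied to diagonal extraction: for any n×n matrix M and any 1 ≤ k ≤ n, the sum of the k largest singular values of the diagonal part M_d is at most the sum of the k largest singular values of M. -/

import Mathlib

open scoped BigOperators

/-- Singular values of a real square matrix: square roots of the eigenvalues
of `Mᵀ * M`. -/
noncomputable def singVals {n : ℕ} (M : Matrix (Fin n) (Fin n) ℝ) : Fin n → ℝ :=
  fun i => Real.sqrt ((show (M.transpose * M).IsHermitian by
    simpa [Matrix.conjTranspose_eq_transpose_of_trivial] using
      Matrix.isHermitian_conjTranspose_mul_self M).eigenvalues i)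

/-- The sum of the `k` largest singular values of `M`, expressed as the supremum of
sums of singular values over index sets of cardinality `k`. -/
noncomputable def sumTopSingVals {n : ℕ} (M : Matrix (Fin n) (Fin n) ℝ) (k : ℕ) : ℝ :=
  sSup {x : ℝ | ∃ s : Finset (Fin n), s.card = k ∧ x = ∑ i ∈ s, singVals M i}

namespace KyFanAux


open Matrix Finset

variable {n : ℕ}

lemma sq_singVals (M : Matrix (Fin n) (Fin n) ℝ) (i : Fin n) :
    singVals M i ^ 2 = (show (M.transpose * M).IsHermitian by
      simpa [Matrix.conjTranspose_eq_transpose_of_trivial] using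
        Matrix.isHermitian_conjTranspose_mul_self M).eigenvalues i :=
  Real.sq_sqrt (Matrix.eigenvalues_conjTranspose_mul_self_nonneg M i)

lemma exists_svd (N : Matrix (Fin n) (Fin n) ℝ) :
    ∃ U V : Matrix (Fin n) (Fin n) ℝ,
      N = U * Matrix.diagonal (singVals N) * Vᵀ ∧
      Uᵀ * N * V = Matrix.diagonal (singVals N) ∧
      (∀ j, ∑ i, U i j ^ 2 ≤ 1) ∧ (∀ j, ∑ i, V i j ^ 2 ≤ 1) ∧
      (∀ i, ∑ j, U i j ^ 2 ≤ 1) ∧ (∀ i, ∑ j, V i j ^ 2 ≤ 1) := by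
  classical
  set hA : (N.transpose * N).IsHermitian := (show (N.transpose * N).IsHermitian by
      simpa [Matrix.conjTranspose_eq_transpose_of_trivial] using
        Matrix.isHermitian_conjTranspose_mul_self N) with hhA
  set lam : Fin n → ℝ := hA.eigenvalues with hlam
  have hσsq : ∀ i, singVals N i ^ 2 = lam i := fun i => sq_singVals N i
  set σ : Fin n → ℝ := singVals N with hσ
  have hσ0 : ∀ i, σ i = 0 → lam i = 0 := by
    intro i h; rw [← hσsq i, h]; ring
  set V : Matrix (Fin n) (Fin n) ℝ := (hA.eigenvectorUnitary : Matrix (Fin n) (Fin n) ℝ) with hV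
  have hstar : star V = Vᵀ := by
    rw [Matrix.star_eq_conjTranspose, Matrix.conjTranspose_eq_transpose_of_trivial]
  have hVtV : Vᵀ * V = 1 := by
    rw [← hstar]; exact Unitary.coe_star_mul_self hA.eigenvectorUnitary
  have hVVt : V * Vᵀ = 1 := by
    rw [← hstar]; exact Unitary.coe_mul_star_self hA.eigenvectorUnitary
  have hspec : Vᵀ * (Nᴴ * N) * V = Matrix.diagonal lam := by
    have := hA.conjStarAlgAut_star_eigenvectorUnitary
    simp only [Unitary.conjStarAlgAut_star_apply, Unitary.coe_star] at this
    rw [hstar] at this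
    simpa using this
  set g : Fin n → ℝ := fun j => if σ j = 0 then 0 else (σ j)⁻¹ with hg
  set W : Matrix (Fin n) (Fin n) ℝ := N * V with hW
  have hWtW : Wᵀ * W = Matrix.diagonal lam := by
    rw [hW, Matrix.transpose_mul]
    have hNt : Nᵀ = Nᴴ := (Matrix.conjTranspose_eq_transpose_of_trivial N).symm
    rw [hNt, ← Matrix.mul_assoc, Matrix.mul_assoc Vᵀ Nᴴ N] at *
    exact hspec
  have hWcol : ∀ j, ∑ i, W i j ^ 2 = lam j := by
    intro j
    have := congrArg (fun P => P j j) hWtW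
    simpa [Matrix.mul_apply, Matrix.transpose_apply, pow_two] using this
  have hWzero : ∀ i j, σ j = 0 → W i j = 0 := by
    intro i j h
    have h0 : ∑ i, W i j ^ 2 = 0 := by rw [hWcol j, hσ0 j h]
    have := (Finset.sum_eq_zero_iff_of_nonneg (fun i _ => sq_nonneg (W i j))).1 h0 i (mem_univ i)
    exact (pow_eq_zero_iff two_ne_zero).1 this
  set U : Matrix (Fin n) (Fin n) ℝ := W * Matrix.diagonal g with hU
  have hUapp : ∀ i j, U i j = W i j * g j := by
    intro i j; rw [hU, Matrix.mul_diagonal]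
  have hUzero : ∀ i j, σ j = 0 → U i j = 0 := by
    intro i j h; rw [hUapp, hg]; simp [h]
  have hUdiagσ : U * Matrix.diagonal σ = W := by
    ext i j
    rw [Matrix.mul_diagonal, hUapp]
    by_cases h : σ j = 0
    · rw [hWzero i j h, h]; ring
    · rw [hg]; simp only [h, if_false]; field_simp
  have hcon1 : N = U * Matrix.diagonal σ * Vᵀ := by
    rw [hUdiagσ, hW, Matrix.mul_assoc, hVVt, Matrix.mul_one]
  have hUtU : Uᵀ * U = Matrix.diagonal (fun j => if σ j = 0 then 0 else 1) := by
    rw [hU, Matrix.transpose_mul, Matrix.diagonal_transpose, Matrix.mul_assoc,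
      ← Matrix.mul_assoc Wᵀ, hWtW, Matrix.diagonal_mul_diagonal, Matrix.diagonal_mul_diagonal]
    refine congrArg Matrix.diagonal (funext fun j => ?_)
    by_cases h : σ j = 0
    · simp [hg, h]
    · have hl : lam j = σ j ^ 2 := (hσsq j).symm
      simp only [Pi.mul_apply, hg, h, if_false, hl]
      field_simp
  have hcon2 : Uᵀ * N * V = Matrix.diagonal σ := by
    rw [hU, Matrix.transpose_mul, Matrix.diagonal_transpose, Matrix.mul_assoc,
      ← hW, Matrix.mul_assoc, hWtW, Matrix.diagonal_mul_diagonal]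
    refine congrArg Matrix.diagonal (funext fun j => ?_)
    by_cases h : σ j = 0
    · simp [hg, h, hσ0 j h]
    · have hl : lam j = σ j ^ 2 := (hσsq j).symm
      simp only [Pi.mul_apply, hg, h, if_false, hl]
      field_simp
  refine ⟨U, V, hcon1, hcon2, ?_, ?_, ?_, ?_⟩
  · -- column norms of U
    intro j
    have h1 := congrArg (fun P => P j j) hUtU
    simp only [Matrix.mul_apply, Matrix.transpose_apply, Matrix.diagonal_apply_eq] at h1
    have h2 : ∑ i, U i j ^ 2 = if σ j = 0 then (0:ℝ) else 1 := by
      rw [← h1]; congr 1; funext i; ring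
    rw [h2]; split <;> norm_num
  · -- column norms of V
    intro j
    have h1 := congrArg (fun P => P j j) hVtV
    simp only [Matrix.mul_apply, Matrix.transpose_apply, Matrix.one_apply_eq] at h1
    have h2 : ∑ i, V i j ^ 2 = 1 := by rw [← h1]; congr 1; funext i; ring
    exact le_of_eq h2
  · -- row norms of U
    intro i
    set P : Matrix (Fin n) (Fin n) ℝ := U * Uᵀ with hP
    have hUe : Matrix.diagonal (fun j => if σ j = 0 then (0:ℝ) else 1) * Uᵀ = Uᵀ := by
      ext a b
      rw [Matrix.diagonal_mul, Matrix.transpose_apply]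
      by_cases h : σ a = 0
      · rw [hUzero b a h]; ring
      · simp [h]
    have hPP : P * P = P := by
      rw [hP, Matrix.mul_assoc, ← Matrix.mul_assoc Uᵀ, hUtU, hUe]
    have hPt : Pᵀ = P := by
      rw [hP, Matrix.transpose_mul, Matrix.transpose_transpose]
    have hPsymm : ∀ a b, P a b = P b a := by
      intro a b
      have := congrArg (fun R => R a b) hPt
      simpa [Matrix.transpose_apply] using this.symm
    have hQii : 0 ≤ ((1 : Matrix (Fin n) (Fin n) ℝ) - P) i i := by
      have hQ : ((1 : Matrix (Fin n) (Fin n) ℝ) - P) * (1 - P) = 1 - P := by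
        have h3 : ((1 : Matrix (Fin n) (Fin n) ℝ) - P) * (1 - P) = 1 - P - P + P * P := by
          noncomm_ring
        rw [h3, hPP]; noncomm_ring
      have h1 := congrArg (fun R => R i i) hQ
      simp only [Matrix.mul_apply] at h1
      rw [← h1]
      apply Finset.sum_nonneg
      intro j _
      have hsym : ((1 : Matrix (Fin n) (Fin n) ℝ) - P) i j
          = ((1 : Matrix (Fin n) (Fin n) ℝ) - P) j i := by
        by_cases h : i = j
        · subst h; rfl
        · simp [Matrix.sub_apply, Matrix.one_apply, h, Ne.symm h, hPsymm i j]
      rw [hsym]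
      exact mul_self_nonneg _
    have hPii : P i i ≤ 1 := by
      simp only [Matrix.sub_apply, Matrix.one_apply_eq] at hQii
      linarith
    calc ∑ j, U i j ^ 2 = ∑ j, U i j * U i j := by
          refine Finset.sum_congr rfl fun j _ => ?_; ring
    _ = P i i := by rw [hP]; simp [Matrix.mul_apply, Matrix.transpose_apply]
    _ ≤ 1 := hPii
  · -- row norms of V
    intro i
    have h1 := congrArg (fun R => R i i) hVVt
    simp only [Matrix.mul_apply, Matrix.transpose_apply, Matrix.one_apply_eq] at h1
    have h2 : ∑ j, V i j ^ 2 = 1 := by rw [← h1]; congr 1; funext j; ring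
    exact le_of_eq h2



/-- If `0 ≤ c ≤ 1`, `∑ c ≤ k`, `σ ≥ 0`, then `∑ σ c` is at most the sum of `σ` over some
`k`-element set. -/
lemma sum_mul_le_top_sum (σ c : Fin n → ℝ) (k : ℕ) (hk1 : 1 ≤ k) (hkn : k ≤ n)
    (hσ : ∀ j, 0 ≤ σ j) (hc0 : ∀ j, 0 ≤ c j) (hc1 : ∀ j, c j ≤ 1)
    (hck : ∑ j, c j ≤ (k : ℝ)) :
    ∃ T : Finset (Fin n), T.card = k ∧ ∑ j, σ j * c j ≤ ∑ j ∈ T, σ j := by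
  classical
  have hn1 : 1 ≤ n := le_trans hk1 hkn
  have hnk : n - k < n := by omega
  set e := Tuple.sort σ with he
  set m : Fin n := ⟨n - k, hnk⟩ with hm
  set T : Finset (Fin n) := Finset.map e.toEmbedding (Finset.Ici m) with hT
  have hcard : T.card = k := by
    rw [hT, Finset.card_map, Fin.card_Ici]
    have : (m : ℕ) = n - k := rfl
    omega
  have hmemT : ∀ j, j ∈ T ↔ m ≤ e.symm j := by
    intro j
    simp only [hT, Finset.mem_map, Finset.mem_Ici, Equiv.coe_toEmbedding]
    constructor
    · rintro ⟨a, ha, rfl⟩; simpa using ha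
    · intro h; exact ⟨e.symm j, h, by simp⟩
  have hmono : Monotone (σ ∘ e) := Tuple.monotone_sort σ
  -- σ (e m) is a lower bound on T and an upper bound off T
  have hlow : ∀ j ∈ T, σ (e m) ≤ σ j := by
    intro j hj
    have h1 : m ≤ e.symm j := (hmemT j).1 hj
    have := hmono h1
    simpa using this
  have hhigh : ∀ j, j ∉ T → σ j ≤ σ (e m) := by
    intro j hj
    have h1 : e.symm j ≤ m := le_of_not_ge (fun h => hj ((hmemT j).2 h))
    have := hmono h1
    simpa using this
  refine ⟨T, hcard, ?_⟩
  have hsplit : ∑ j, σ j * c j = ∑ j ∈ T, σ j * c j + ∑ j ∈ Tᶜ, σ j * c j :=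
    (Finset.sum_add_sum_compl T _).symm
  have hsplitc : ∑ j ∈ T, c j + ∑ j ∈ Tᶜ, c j = ∑ j, c j :=
    Finset.sum_add_sum_compl T _
  have hb1 : ∑ j ∈ Tᶜ, σ j * c j ≤ σ (e m) * ∑ j ∈ Tᶜ, c j := by
    rw [Finset.mul_sum]
    refine Finset.sum_le_sum fun j hj => ?_
    have hj' : j ∉ T := by simpa using hj
    exact mul_le_mul_of_nonneg_right (hhigh j hj') (hc0 j)
  have hb2 : σ (e m) * ∑ j ∈ Tᶜ, c j ≤ σ (e m) * ∑ j ∈ T, (1 - c j) := by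
    apply mul_le_mul_of_nonneg_left _ (hσ _)
    have h1 : ∑ j ∈ T, (1 - c j) = (k : ℝ) - ∑ j ∈ T, c j := by
      rw [Finset.sum_sub_distrib, Finset.sum_const, hcard]
      simp [nsmul_eq_mul]
    rw [h1]
    have : ∑ j ∈ Tᶜ, c j = ∑ j, c j - ∑ j ∈ T, c j := by linarith [hsplitc]
    rw [this]
    linarith
  have hb3 : σ (e m) * ∑ j ∈ T, (1 - c j) ≤ ∑ j ∈ T, σ j * (1 - c j) := by
    rw [Finset.mul_sum]
    refine Finset.sum_le_sum fun j hj => ?_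
    exact mul_le_mul_of_nonneg_right (hlow j hj) (by linarith [hc1 j])
  have hfinal : ∑ j ∈ T, σ j * c j + ∑ j ∈ T, σ j * (1 - c j) = ∑ j ∈ T, σ j := by
    rw [← Finset.sum_add_distrib]
    refine Finset.sum_congr rfl fun j _ => by ring
  linarith [hsplit, hb1, hb2, hb3, hfinal]

/-- Cauchy–Schwarz style helper. -/
lemma abs_inner_le_one (s : Finset (Fin n)) (f g : Fin n → ℝ)
    (hf : ∑ i, f i ^ 2 ≤ 1) (hg : ∑ i, g i ^ 2 ≤ 1) :
    ∑ i ∈ s, |f i| * |g i| ≤ 1 := by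
  have h1 : ∑ i ∈ s, |f i| * |g i|
      ≤ Real.sqrt (∑ i ∈ s, |f i| ^ 2) * Real.sqrt (∑ i ∈ s, |g i| ^ 2) :=
    Real.sum_mul_le_sqrt_mul_sqrt s _ _
  have hf' : ∑ i ∈ s, |f i| ^ 2 ≤ 1 := by
    refine le_trans (le_trans (le_of_eq ?_) (Finset.sum_le_sum_of_subset_of_nonneg
      (Finset.subset_univ s) fun i _ _ => sq_nonneg (f i))) hf
    exact Finset.sum_congr rfl fun i _ => by rw [sq_abs]
  have hg' : ∑ i ∈ s, |g i| ^ 2 ≤ 1 := by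
    refine le_trans (le_trans (le_of_eq ?_) (Finset.sum_le_sum_of_subset_of_nonneg
      (Finset.subset_univ s) fun i _ _ => sq_nonneg (g i))) hg
    exact Finset.sum_congr rfl fun i _ => by rw [sq_abs]
  have h2 : Real.sqrt (∑ i ∈ s, |f i| ^ 2) ≤ 1 := by
    rw [show (1:ℝ) = Real.sqrt 1 by simp]
    exact Real.sqrt_le_sqrt hf'
  have h3 : Real.sqrt (∑ i ∈ s, |g i| ^ 2) ≤ 1 := by
    rw [show (1:ℝ) = Real.sqrt 1 by simp]
    exact Real.sqrt_le_sqrt hg'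
  calc ∑ i ∈ s, |f i| * |g i| ≤ _ := h1
  _ ≤ 1 * 1 := mul_le_mul h2 h3 (Real.sqrt_nonneg _) (by norm_num)
  _ = 1 := by norm_num

lemma cs_bounds (U V : Matrix (Fin n) (Fin n) ℝ)
    (hUc : ∀ j, ∑ i, U i j ^ 2 ≤ 1) (hVc : ∀ j, ∑ i, V i j ^ 2 ≤ 1)
    (hUr : ∀ i, ∑ j, U i j ^ 2 ≤ 1) (hVr : ∀ i, ∑ j, V i j ^ 2 ≤ 1)
    (S : Finset (Fin n)) (k : ℕ) (hS : S.card = k) :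
    (∀ j, ∑ i ∈ S, |U i j| * |V i j| ≤ 1) ∧
      (∑ j, ∑ i ∈ S, |U i j| * |V i j|) ≤ (k : ℝ) := by
  constructor
  · intro j
    exact abs_inner_le_one S (fun i => U i j) (fun i => V i j) (hUc j) (hVc j)
  · rw [Finset.sum_comm]
    calc ∑ i ∈ S, ∑ j, |U i j| * |V i j| ≤ ∑ i ∈ S, 1 := by
          refine Finset.sum_le_sum fun i _ => ?_
          exact abs_inner_le_one Finset.univ (fun j => U i j) (fun j => V i j) (hUr i) (hVr i)
    _ = (k : ℝ) := by rw [Finset.sum_const, hS]; simp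


lemma singVals_nonneg (M : Matrix (Fin n) (Fin n) ℝ) (i : Fin n) : 0 ≤ singVals M i :=
  Real.sqrt_nonneg _

lemma bddAbove_set (M : Matrix (Fin n) (Fin n) ℝ) (k : ℕ) :
    BddAbove {x : ℝ | ∃ s : Finset (Fin n), s.card = k ∧ x = ∑ i ∈ s, singVals M i} := by
  apply Set.Finite.bddAbove
  apply Set.Finite.subset (Set.finite_range (fun s : Finset (Fin n) => ∑ i ∈ s, singVals M i))
  rintro x ⟨s, _, rfl⟩
  exact ⟨s, rfl⟩

lemma le_sumTop (M : Matrix (Fin n) (Fin n) ℝ) {k : ℕ} (T : Finset (Fin n)) (hT : T.card = k) :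
    ∑ i ∈ T, singVals M i ≤ sumTopSingVals M k :=
  le_csSup (bddAbove_set M k) ⟨T, hT, rfl⟩

/-- The main Ky Fan bound: any `k`-element sum of absolute diagonal entries is at most
the sum of the `k` largest singular values. -/
lemma abs_diag_sum_le (M : Matrix (Fin n) (Fin n) ℝ) (k : ℕ) (hk1 : 1 ≤ k) (hkn : k ≤ n)
    (S : Finset (Fin n)) (hS : S.card = k) :
    ∑ i ∈ S, |M i i| ≤ sumTopSingVals M k := by
  classical
  obtain ⟨U, V, h1, h2, hUc, hVc, hUr, hVr⟩ := exists_svd M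
  set σ : Fin n → ℝ := singVals M with hσ
  have hentry : ∀ i, M i i = ∑ j, U i j * σ j * V i j := by
    intro i
    calc M i i = ((U * Matrix.diagonal σ) * Vᵀ) i i := by rw [← h1]
    _ = ∑ j, (U * Matrix.diagonal σ) i j * Vᵀ j i := Matrix.mul_apply
    _ = ∑ j, U i j * σ j * V i j := by
        refine Finset.sum_congr rfl fun j _ => ?_
        rw [Matrix.mul_diagonal, Matrix.transpose_apply]
  have habs : ∀ i, |M i i| ≤ ∑ j, σ j * (|U i j| * |V i j|) := by
    intro i
    rw [hentry i]
    refine le_trans (Finset.abs_sum_le_sum_abs _ _) ?_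
    refine Finset.sum_le_sum fun j _ => ?_
    rw [abs_mul, abs_mul, abs_of_nonneg (singVals_nonneg M j)]
    exact le_of_eq (by ring)
  have hsum : ∑ i ∈ S, |M i i| ≤ ∑ j, σ j * (∑ i ∈ S, |U i j| * |V i j|) := by
    calc ∑ i ∈ S, |M i i| ≤ ∑ i ∈ S, ∑ j, σ j * (|U i j| * |V i j|) :=
          Finset.sum_le_sum fun i _ => habs i
    _ = ∑ j, ∑ i ∈ S, σ j * (|U i j| * |V i j|) := Finset.sum_comm
    _ = ∑ j, σ j * (∑ i ∈ S, |U i j| * |V i j|) := by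
        refine Finset.sum_congr rfl fun j _ => (Finset.mul_sum _ _ _).symm
  obtain ⟨hc1, hck⟩ := cs_bounds U V hUc hVc hUr hVr S k hS
  have hc0 : ∀ j, 0 ≤ ∑ i ∈ S, |U i j| * |V i j| :=
    fun j => Finset.sum_nonneg fun i _ => mul_nonneg (abs_nonneg _) (abs_nonneg _)
  obtain ⟨T, hTcard, hTle⟩ := sum_mul_le_top_sum σ (fun j => ∑ i ∈ S, |U i j| * |V i j|)
    k hk1 hkn (fun j => singVals_nonneg M j) hc0 hc1 hck
  exact le_trans hsum (le_trans hTle (le_sumTop M T hTcard))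

end KyFanAux

/-- Ky Fan inequality applied to diagonal extraction: for any `n×n` matrix `M` and any
`1 ≤ k ≤ n`, the sum of the `k` largest singular values of the diagonal part `M_d`
is at most the sum of the `k` largest singular values of `M`. -/
theorem stmt_3 {n : ℕ} (M : Matrix (Fin n) (Fin n) ℝ) (k : ℕ) (hk1 : 1 ≤ k) (hkn : k ≤ n) :
    sumTopSingVals (Matrix.diagonal (fun i => M i i)) k ≤ sumTopSingVals M k := by
  classical
  set D := Matrix.diagonal (fun i => M i i) with hD
  show sSup {x : ℝ | ∃ s : Finset (Fin n), s.card = k ∧ x = ∑ i ∈ s, singVals D i}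
      ≤ sumTopSingVals M k
  apply csSup_le
  · obtain ⟨s, _, hs⟩ := Finset.exists_subset_card_eq
      (show k ≤ (Finset.univ : Finset (Fin n)).card by simpa using hkn)
    exact ⟨∑ i ∈ s, singVals D i, s, hs, rfl⟩
  · rintro x ⟨s, hs, rfl⟩
    obtain ⟨U, V, h1, h2, hUc, hVc, hUr, hVr⟩ := KyFanAux.exists_svd D
    have hsing : ∀ j, singVals D j = ∑ a, U a j * (M a a * V a j) := by
      intro j
      have hDj := congrArg (fun R => R j j) h2
      calc singVals D j = Matrix.diagonal (singVals D) j j := (Matrix.diagonal_apply_eq _ j).symm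
      _ = (U.transpose * D * V) j j := by rw [h2]
      _ = (U.transpose * (D * V)) j j := by rw [Matrix.mul_assoc]
      _ = ∑ a, U.transpose j a * (D * V) a j := Matrix.mul_apply
      _ = ∑ a, U a j * (M a a * V a j) := by
          refine Finset.sum_congr rfl fun a _ => ?_
          rw [Matrix.transpose_apply, hD, Matrix.diagonal_mul]
    have key : ∑ j ∈ s, singVals D j = ∑ a, M a a * (∑ j ∈ s, U a j * V a j) := by
      calc ∑ j ∈ s, singVals D j = ∑ j ∈ s, ∑ a, U a j * (M a a * V a j) :=
            Finset.sum_congr rfl fun j _ => hsing j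
      _ = ∑ a, ∑ j ∈ s, U a j * (M a a * V a j) := Finset.sum_comm
      _ = ∑ a, M a a * (∑ j ∈ s, U a j * V a j) := by
          refine Finset.sum_congr rfl fun a _ => ?_
          rw [Finset.mul_sum]
          refine Finset.sum_congr rfl fun j _ => by ring
    have hle1 : ∑ j ∈ s, singVals D j ≤ ∑ a, |M a a| * (∑ j ∈ s, |U a j| * |V a j|) := by
      rw [key]
      refine Finset.sum_le_sum fun a _ => ?_
      calc M a a * (∑ j ∈ s, U a j * V a j) ≤ |M a a * (∑ j ∈ s, U a j * V a j)| := le_abs_self _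
      _ = |M a a| * |∑ j ∈ s, U a j * V a j| := abs_mul _ _
      _ ≤ |M a a| * (∑ j ∈ s, |U a j| * |V a j|) := by
          refine mul_le_mul_of_nonneg_left ?_ (abs_nonneg _)
          refine le_trans (Finset.abs_sum_le_sum_abs _ _) ?_
          exact Finset.sum_le_sum fun j _ => le_of_eq (abs_mul _ _)
    obtain ⟨hc1, hck⟩ := KyFanAux.cs_bounds U.transpose V.transpose
      (fun j => by simpa [Matrix.transpose_apply] using hUr j)
      (fun j => by simpa [Matrix.transpose_apply] using hVr j)
      (fun i => by simpa [Matrix.transpose_apply] using hUc i)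
      (fun i => by simpa [Matrix.transpose_apply] using hVc i) s k hs
    have hc1' : ∀ a, ∑ j ∈ s, |U a j| * |V a j| ≤ 1 := by
      intro a; simpa [Matrix.transpose_apply] using hc1 a
    have hck' : ∑ a, ∑ j ∈ s, |U a j| * |V a j| ≤ (k : ℝ) := by
      simpa [Matrix.transpose_apply] using hck
    have hc0 : ∀ a, 0 ≤ ∑ j ∈ s, |U a j| * |V a j| :=
      fun a => Finset.sum_nonneg fun j _ => mul_nonneg (abs_nonneg _) (abs_nonneg _)
    obtain ⟨T, hTcard, hTle⟩ := KyFanAux.sum_mul_le_top_sum (fun a => |M a a|)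
      (fun a => ∑ j ∈ s, |U a j| * |V a j|) k hk1 hkn (fun a => abs_nonneg _) hc0 hc1' hck'
    exact le_trans hle1 (le_trans hTle (KyFanAux.abs_diag_sum_le M k hk1 hkn T hTcard))
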